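/- Let G be a simple connected graph with m vertices and n edges, let A = A(G) ∈ ℤ^{(m−1)×n} be its reduced incidence matrix with columns a₁,…,aₙ, let K > 0, and let ω ∈ ℝ^{m−1} satisfy ω/K ∈ Ω⁺ = {A·x : x ∈ 𝒮_A⁺}. Let x* ∈ 𝒮_A⁺ be the unique point with A·x* = ω/K, and let θ* ∈ ℝ^{m−1} be the unique solution of Aᵀθ* = arcsin(x*) (arcsin applied coordinatewise). Then θ* is a steady state of the Kuramoto system θ̇ = ω − K·A·(sin(a₁·θ),…,sin(aₙ·θ))ᵀ, cos(a_ℓ·θ*) > 0 for all ℓ = 1,…,n, and θ* is linearly stable: the symmetric Jacobian matrix −K·A·diag(cos(a₁·θ*),…,cos(aₙ·θ*))·Aᵀ is negative definite. -/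

import Mathlib

noncomputable section


/-- The real row span of the integer matrix `A`. -/
def rowSpanR {d n : ℕ} (A : Matrix (Fin d) (Fin n) ℤ) : Submodule ℝ (Fin n → ℝ) :=
  Submodule.span ℝ (Set.range fun i : Fin d => fun j : Fin n => (A i j : ℝ))

/-- The polytope `P = Row(A) ∩ [-π/2, π/2]ⁿ`. -/
def Pcube {d n : ℕ} (A : Matrix (Fin d) (Fin n) ℤ) : Set (Fin n → ℝ) :=
  {x | x ∈ rowSpanR A ∧ ∀ j, x j ∈ Set.Icc (-(Real.pi / 2)) (Real.pi / 2)}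

/-- `𝒮_A⁺ = sin(int P)`, the coordinatewise sine image of the (relative) interior of `P`. -/
def SAplus {d n : ℕ} (A : Matrix (Fin d) (Fin n) ℤ) : Set (Fin n → ℝ) :=
  (fun x j => Real.sin (x j)) '' intrinsicInterior ℝ (Pcube A)

/-- Proposition 4.5: for the Kuramoto model of a connected graph `G` with reduced
incidence matrix `A`, if `ω/K ∈ Ω⁺` then the point `θ*` with `Aᵀθ* = arcsin(x*)`
is a linearly stable steady state: the equations hold, `cos(a_ℓ·θ*) > 0`, and the
Jacobian is negative definite. -/
theorem stmt11 {d n : ℕ} (G : SimpleGraph (Fin (d + 1))) (hconn : G.Connected)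
    (src tgt : Fin n → Fin (d + 1))
    (hadj : ∀ l, G.Adj (src l) (tgt l))
    (hedges : ∀ e ∈ G.edgeSet, ∃! l : Fin n, e = s(src l, tgt l))
    (A : Matrix (Fin d) (Fin n) ℤ)
    (hA : ∀ (i : Fin d) (l : Fin n), A i l =
      (if i.castSucc = src l then 1 else 0) - (if i.castSucc = tgt l then 1 else 0))
    (K : ℝ) (hK : 0 < K) (ω : Fin d → ℝ)
    (xstar : Fin n → ℝ) (hx : xstar ∈ SAplus A)
    (hAx : ∀ i, ∑ j, (A i j : ℝ) * xstar j = ω i / K)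
    (θstar : Fin d → ℝ)
    (hθ : ∀ l, ∑ i, (A i l : ℝ) * θstar i = Real.arcsin (xstar l)) :
    (∀ i, ω i - K * ∑ l, (A i l : ℝ) * Real.sin (∑ i', (A i' l : ℝ) * θstar i') = 0) ∧
    (∀ l, 0 < Real.cos (∑ i, (A i l : ℝ) * θstar i)) ∧
    (∀ v : Fin d → ℝ, v ≠ 0 →
      ∑ i, ∑ i', v i * (-(K * ∑ l, (A i l : ℝ) *
        Real.cos (∑ i'', (A i'' l : ℝ) * θstar i'') * (A i' l : ℝ))) * v i' < 0) := by
  have hπ : (0:ℝ) < Real.pi / 2 := by positivity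
  obtain ⟨y, hy_int, hy_eq⟩ := hx
  have hyP : y ∈ Pcube A := intrinsicInterior_subset hy_int
  have hxy : ∀ l, xstar l = Real.sin (y l) := fun l => (congrFun hy_eq l).symm
  -- each column of A is nonzero
  have hcol : ∀ l : Fin n, ∃ i : Fin d, A i l ≠ 0 := by
    intro l
    have hne : src l ≠ tgt l := (hadj l).ne
    rcases eq_or_ne (src l) (Fin.last d) with hs | hs
    · have ht : tgt l ≠ Fin.last d := fun h => hne (hs.trans h.symm)
      obtain ⟨i, hi⟩ := Fin.exists_castSucc_eq.mpr ht
      refine ⟨i, ?_⟩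
      rw [hA i l, if_neg (by rw [hs]; exact (Fin.castSucc_lt_last i).ne), if_pos hi]
      norm_num
    · obtain ⟨i, hi⟩ := Fin.exists_castSucc_eq.mpr hs
      refine ⟨i, ?_⟩
      rw [hA i l, if_pos hi, if_neg (fun h => hne (hi.symm.trans h))]
      norm_num
  -- strict interior bounds on y
  have hymem : ∀ l, y l ∈ Set.Ioo (-(Real.pi / 2)) (Real.pi / 2) := by
    intro l
    obtain ⟨i₀, hi₀⟩ := hcol l
    set r : Fin n → ℝ := fun j => (A i₀ j : ℝ) with hr
    have hrl : r l ≠ 0 := by simpa [hr] using hi₀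
    have hr_span : r ∈ rowSpanR A := Submodule.subset_span ⟨i₀, rfl⟩
    -- a small multiple of r lies in Pcube A
    set ε : ℝ := (Real.pi / 2) / (‖r‖ + 1) with hε
    have hεpos : 0 < ε := by positivity
    have hεr : ε • r ∈ Pcube A := by
      refine ⟨Submodule.smul_mem _ _ hr_span, fun j => ?_⟩
      have h1 : |r j| ≤ ‖r‖ := by
        simpa [Real.norm_eq_abs] using norm_le_pi_norm r j
      have h2 : |ε * r j| ≤ Real.pi / 2 := by
        rw [abs_mul, abs_of_pos hεpos]
        calc ε * |r j| ≤ ε * (‖r‖ + 1) := by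
              have : (0:ℝ) ≤ ε := hεpos.le
              nlinarith [norm_nonneg r]
          _ = Real.pi / 2 := by
              rw [hε]; field_simp
      have := abs_le.mp h2
      exact ⟨this.1, this.2⟩
    have h0P : (0 : Fin n → ℝ) ∈ Pcube A :=
      ⟨Submodule.zero_mem _, fun j => by
        simp only [Pi.zero_apply, Set.mem_Icc]; constructor <;> linarith⟩
    -- r lies in the direction of the affine span of Pcube A
    have hr_dir : r ∈ (affineSpan ℝ (Pcube A)).direction := by
      rw [direction_affineSpan]
      have h1 : (ε • r) -ᵥ (0 : Fin n → ℝ) ∈ vectorSpan ℝ (Pcube A) :=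
        vsub_mem_vectorSpan ℝ hεr h0P
      have h2 : ε • r ∈ vectorSpan ℝ (Pcube A) := by simpa using h1
      have h3 : ε⁻¹ • (ε • r) ∈ vectorSpan ℝ (Pcube A) :=
        Submodule.smul_mem _ _ h2
      rwa [smul_smul, inv_mul_cancel₀ hεpos.ne', one_smul] at h3
    have hy_span : y ∈ affineSpan ℝ (Pcube A) := subset_affineSpan ℝ _ hyP
    -- the curve t ↦ y + t • r inside the affine span
    have hmem : ∀ t : ℝ, y + t • r ∈ affineSpan ℝ (Pcube A) := by
      intro t
      have : (t • r) +ᵥ y ∈ affineSpan ℝ (Pcube A) :=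
        AffineSubspace.vadd_mem_of_mem_direction
          (Submodule.smul_mem _ _ hr_dir) hy_span
      simpa [vadd_eq_add, add_comm] using this
    set c : ℝ → affineSpan ℝ (Pcube A) := fun t => ⟨y + t • r, hmem t⟩ with hc
    have hc_cont : Continuous c := by
      apply Continuous.subtype_mk
      exact continuous_const.add (continuous_id.smul continuous_const)
    obtain ⟨z, hz_int, hz_eq⟩ := hy_int
    have hc0 : c 0 = z := by
      apply Subtype.ext
      simp [hc, hz_eq]
    have hopen : IsOpen (c ⁻¹' interior ((↑) ⁻¹' Pcube A : Set (affineSpan ℝ (Pcube A)))) :=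
      isOpen_interior.preimage hc_cont
    have h0mem : (0:ℝ) ∈ c ⁻¹' interior ((↑) ⁻¹' Pcube A : Set (affineSpan ℝ (Pcube A))) := by
      simp only [Set.mem_preimage, hc0]
      exact hz_int
    obtain ⟨δ, hδpos, hball⟩ := Metric.isOpen_iff.mp hopen 0 h0mem
    set t : ℝ := δ / 2 with ht
    have htpos : 0 < t := by positivity
    have hmemball : ∀ s : ℝ, |s| < δ → y + s • r ∈ Pcube A := by
      intro s hs
      have : s ∈ Metric.ball (0:ℝ) δ := by
        simpa [Real.dist_eq] using hs
      have := interior_subset (hball this)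
      simpa [hc] using this
    have h₁ : y + t • r ∈ Pcube A := hmemball t (by rw [abs_of_pos htpos]; linarith)
    have h₂ : y + (-t) • r ∈ Pcube A := hmemball (-t) (by rw [abs_neg, abs_of_pos htpos]; linarith)
    have hb₁ := (h₁.2 l)
    have hb₂ := (h₂.2 l)
    simp only [Pi.add_apply, Pi.smul_apply, smul_eq_mul, Set.mem_Icc] at hb₁ hb₂
    have htr : t * r l ≠ 0 := mul_ne_zero htpos.ne' hrl
    have habs : 0 < |t * r l| := abs_pos.mpr htr
    constructor
    · rcases abs_cases (t * r l) with ⟨he, _⟩ | ⟨he, _⟩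
      · nlinarith [hb₂.1]
      · nlinarith [hb₁.1]
    · rcases abs_cases (t * r l) with ⟨he, _⟩ | ⟨he, _⟩
      · nlinarith [hb₁.2]
      · nlinarith [hb₂.2]
  -- the key identity: a_l · θ* = y l
  have hcl : ∀ l, ∑ i, (A i l : ℝ) * θstar i = y l := by
    intro l
    rw [hθ l, hxy l]
    exact Real.arcsin_sin (by linarith [(hymem l).1]) (by linarith [(hymem l).2])
  have hsin : ∀ l, Real.sin (∑ i, (A i l : ℝ) * θstar i) = xstar l := by
    intro l; rw [hcl l, hxy l]
  have hcos : ∀ l, 0 < Real.cos (∑ i, (A i l : ℝ) * θstar i) := by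
    intro l; rw [hcl l]
    exact Real.cos_pos_of_mem_Ioo (hymem l)
  refine ⟨?_, hcos, ?_⟩
  · intro i
    have : ∑ l, (A i l : ℝ) * Real.sin (∑ i', (A i' l : ℝ) * θstar i')
        = ∑ l, (A i l : ℝ) * xstar l := by
      exact Finset.sum_congr rfl fun l _ => by rw [hsin l]
    rw [this, hAx i]
    field_simp
    ring
  · intro v hv
    set S : Fin n → ℝ := fun l => ∑ i, (A i l : ℝ) * v i with hS
    set cθ : Fin n → ℝ := fun l => Real.cos (∑ i'', (A i'' l : ℝ) * θstar i'') with hcθ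
    -- there is a column where S is nonzero (rows of A are independent)
    have hSne : ∃ l, S l ≠ 0 := by
      by_contra hall
      push_neg at hall
      set f : Fin (d + 1) → ℝ := Fin.lastCases (motive := fun _ => ℝ) 0 v with hf
      have hfval : ∀ x : Fin (d + 1),
          ∑ i, (if i.castSucc = x then (1:ℝ) else 0) * v i = f x := by
        intro x
        induction x using Fin.lastCases with
        | last =>
          rw [hf, Fin.lastCases_last]
          apply Finset.sum_eq_zero
          intro i _
          rw [if_neg (Fin.castSucc_lt_last i).ne, zero_mul]
        | cast j =>
          rw [hf, Fin.lastCases_castSucc]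
          simp [Fin.castSucc_inj, ite_mul]
      have hfe : ∀ l : Fin n, f (src l) = f (tgt l) := by
        intro l
        have h0 : S l = 0 := hall l
        have hsum : S l = f (src l) - f (tgt l) := by
          rw [hS, ← hfval (src l), ← hfval (tgt l), ← Finset.sum_sub_distrib]
          apply Finset.sum_congr rfl
          intro i _
          rw [hA i l]
          push_cast [apply_ite (fun z : ℤ => (z : ℝ))]
          ring
        rw [h0] at hsum
        linarith
      have hadjf : ∀ u w, G.Adj u w → f u = f w := by
        intro u w huw
        obtain ⟨l, hl, -⟩ := hedges s(u, w) ((SimpleGraph.mem_edgeSet G).mpr huw)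
        rcases Sym2.eq_iff.mp hl with ⟨h1, h2⟩ | ⟨h1, h2⟩
        · rw [h1, h2]; exact hfe l
        · rw [h1, h2]; exact (hfe l).symm
      have hwalk : ∀ u w : Fin (d + 1), f u = f w := by
        intro u w
        obtain ⟨p⟩ := hconn.preconnected u w
        induction p with
        | nil => rfl
        | cons h q ih => exact (hadjf _ _ h).trans ih
      apply hv
      funext i
      have : f i.castSucc = f (Fin.last d) := hwalk _ _
      rw [hf] at this
      simpa using this
    obtain ⟨l₀, hl₀⟩ := hSne
    have key : ∀ l, ∑ i, ∑ i', v i * ((A i l : ℝ) * cθ l * (A i' l : ℝ)) * v i'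
        = cθ l * S l ^ 2 := by
      intro l
      rw [sq, hS]
      rw [show (cθ l * ((∑ i, (A i l : ℝ) * v i) * ∑ i, (A i l : ℝ) * v i))
          = (∑ i, (A i l : ℝ) * v i) * (cθ l * ∑ i', (A i' l : ℝ) * v i') from by ring]
      rw [Finset.sum_mul]
      apply Finset.sum_congr rfl
      intro i _
      rw [Finset.mul_sum, Finset.mul_sum]
      apply Finset.sum_congr rfl
      intro i' _
      ring
    have hrw : ∑ i, ∑ i', v i * (-(K * ∑ l, (A i l : ℝ) * cθ l * (A i' l : ℝ))) * v i'
        = -(K * ∑ l, cθ l * S l ^ 2) := by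
      have h1 : ∀ i i', v i * (-(K * ∑ l, (A i l : ℝ) * cθ l * (A i' l : ℝ))) * v i'
          = ∑ l, -(K * (v i * ((A i l : ℝ) * cθ l * (A i' l : ℝ)) * v i')) := by
        intro i i'
        rw [show v i * (-(K * ∑ l, (A i l : ℝ) * cθ l * (A i' l : ℝ))) * v i'
            = (-(K * v i * v i')) * ∑ l, (A i l : ℝ) * cθ l * (A i' l : ℝ) from by ring,
          Finset.mul_sum]
        exact Finset.sum_congr rfl fun l _ => by ring
      calc ∑ i, ∑ i', v i * (-(K * ∑ l, (A i l : ℝ) * cθ l * (A i' l : ℝ))) * v i'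
          = ∑ i, ∑ i', ∑ l, -(K * (v i * ((A i l : ℝ) * cθ l * (A i' l : ℝ)) * v i')) :=
            Finset.sum_congr rfl fun i _ => Finset.sum_congr rfl fun i' _ => h1 i i'
        _ = ∑ i, ∑ l, ∑ i', -(K * (v i * ((A i l : ℝ) * cθ l * (A i' l : ℝ)) * v i')) :=
            Finset.sum_congr rfl fun i _ => Finset.sum_comm
        _ = ∑ l, ∑ i, ∑ i', -(K * (v i * ((A i l : ℝ) * cθ l * (A i' l : ℝ)) * v i')) :=
            Finset.sum_comm
        _ = ∑ l, -(K * (cθ l * S l ^ 2)) := by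
            apply Finset.sum_congr rfl
            intro l _
            rw [← key l, Finset.mul_sum, ← Finset.sum_neg_distrib]
            apply Finset.sum_congr rfl
            intro i _
            rw [Finset.mul_sum, ← Finset.sum_neg_distrib]
        _ = -(K * ∑ l, cθ l * S l ^ 2) := by
            rw [Finset.mul_sum, ← Finset.sum_neg_distrib]
    rw [hrw]
    have hpos : 0 < ∑ l, cθ l * S l ^ 2 := by
      apply Finset.sum_pos'
      · intro l _
        exact mul_nonneg (hcos l).le (sq_nonneg _)
      · refine ⟨l₀, Finset.mem_univ _, ?_⟩
        have : 0 < S l₀ ^ 2 := by positivity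
        exact mul_pos (hcos l₀) this
    have : 0 < K * ∑ l, cθ l * S l ^ 2 := mul_pos hK hpos
    linarith
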